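/- Let ρ > 0, u ∈ ℝ^d, and M_{ρ,u}(v) = indicator of {|u-v|^d ≤ c_d ρ} with c_d = d/|S_{d-1}|. Then for every measurable f : ℝ^d → [0,∞) with ∫ f dv = ρ, ∫ v f dv = ρu, and ∫|v|² f dv < ∞, and 0 ≤ f ≤ 1, the kinetic energy minimization principle holds: ∫ (|v|²/2) M_{ρ,u}(v) dv ≤ ∫ (|v|²/2) f(v) dv. -/

import Mathlib

open MeasureTheory Real

/-- The Maxwellian of the BGK-alignment model: the indicator of `{v : ‖u - v‖^d ≤ c ρ}`. -/
noncomputable def bgkMaxwellian (d : ℕ) (c ρ : ℝ) (u v : EuclideanSpace ℝ (Fin d)) : ℝ :=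
  if ‖u - v‖ ^ d ≤ c * ρ then 1 else 0

section aux

open scoped RealInnerProductSpace

set_option maxHeartbeats 1000000 in
/-- Second-moment expansion around `u`. -/
lemma second_moment_shift {d : ℕ} (u : EuclideanSpace ℝ (Fin d))
    (h : EuclideanSpace ℝ (Fin d) → ℝ)
    (hi : Integrable h volume) (hmi : Integrable (fun v => h v • v) volume)
    (hki : Integrable (fun v => ‖v‖ ^ 2 * h v) volume) :
    (∫ v, ‖v - u‖ ^ 2 * h v) =
      (∫ v, ‖v‖ ^ 2 * h v) - 2 * ⟪u, ∫ v, h v • v⟫ + ‖u‖ ^ 2 * ∫ v, h v := by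
  have hinner : Integrable (fun v => ⟪u, h v • v⟫) volume := hmi.const_inner u
  have hexp : ∀ v : EuclideanSpace ℝ (Fin d), ‖v - u‖ ^ 2 * h v
      = (‖v‖ ^ 2 * h v - 2 * ⟪u, h v • v⟫) + ‖u‖ ^ 2 * h v := by
    intro v
    have h1 : ‖v - u‖ ^ 2 = ‖v‖ ^ 2 - 2 * ⟪v, u⟫ + ‖u‖ ^ 2 := norm_sub_sq_real v u
    have h2 : ⟪u, h v • v⟫ = h v * ⟪v, u⟫ := by
      rw [real_inner_smul_right, real_inner_comm]
    rw [h1, h2]; ring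
  simp only [hexp]
  have hI1 : Integrable (fun v : EuclideanSpace ℝ (Fin d) =>
      ‖v‖ ^ 2 * h v - 2 * ⟪u, h v • v⟫) volume := hki.sub (hinner.const_mul 2)
  rw [integral_add hI1 (hi.const_mul _),
    integral_sub hki (hinner.const_mul 2), integral_const_mul, integral_const_mul,
    integral_inner hmi]

set_option maxHeartbeats 1000000 in
/-- Integral of the identity over a closed ball centered at `u`. -/
lemma integral_id_closedBall {d : ℕ} (u : EuclideanSpace ℝ (Fin d)) (r : ℝ) :
    (∫ v in Metric.closedBall u r, v) =
      (volume (Metric.closedBall u r)).toReal • u := by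
  have hcompact0 : IsCompact (Metric.closedBall (0 : EuclideanSpace ℝ (Fin d)) r) :=
    isCompact_closedBall _ _
  have hmeas0 : MeasurableSet (Metric.closedBall (0 : EuclideanSpace ℝ (Fin d)) r) :=
    Metric.isClosed_closedBall.measurableSet
  have hmeasu : MeasurableSet (Metric.closedBall u r) := Metric.isClosed_closedBall.measurableSet
  have hfin0 : volume (Metric.closedBall (0 : EuclideanSpace ℝ (Fin d)) r) < ⊤ :=
    hcompact0.measure_lt_top
  -- the odd integral over the symmetric ball vanishes
  have hzero : (∫ w in Metric.closedBall (0 : EuclideanSpace ℝ (Fin d)) r, w) = 0 := by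
    set I := ∫ w in Metric.closedBall (0 : EuclideanSpace ℝ (Fin d)) r, w with hI
    have h1 : I = ∫ w, (Metric.closedBall (0 : EuclideanSpace ℝ (Fin d)) r).indicator
        (fun w => w) w := by rw [hI, integral_indicator hmeas0]
    have h2 : ∀ w : EuclideanSpace ℝ (Fin d),
        (Metric.closedBall (0 : EuclideanSpace ℝ (Fin d)) r).indicator (fun w => w) (-w)
        = - (Metric.closedBall (0 : EuclideanSpace ℝ (Fin d)) r).indicator (fun w => w) w := by
      intro w
      by_cases hw : w ∈ Metric.closedBall (0 : EuclideanSpace ℝ (Fin d)) r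
      · have hw' : -w ∈ Metric.closedBall (0 : EuclideanSpace ℝ (Fin d)) r := by
          simpa [Metric.mem_closedBall] using hw
        rw [Set.indicator_of_mem hw, Set.indicator_of_mem hw']
      · have hw' : -w ∉ Metric.closedBall (0 : EuclideanSpace ℝ (Fin d)) r := by
          simpa [Metric.mem_closedBall] using hw
        rw [Set.indicator_of_notMem hw, Set.indicator_of_notMem hw', neg_zero]
    have h3 : I = -I := by
      conv_lhs => rw [h1, ← integral_neg_eq_self]
      simp only [h2]
      rw [integral_neg, ← h1]
    have h4 : (2 : ℝ) • I = 0 := by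
      rw [two_smul]; nth_rewrite 1 [h3]; exact neg_add_cancel I
    rcases smul_eq_zero.1 h4 with h | h
    · norm_num at h
    · exact h
  -- translation
  have hIdOn : IntegrableOn (fun w : EuclideanSpace ℝ (Fin d) => w)
      (Metric.closedBall (0 : EuclideanSpace ℝ (Fin d)) r) volume :=
    continuous_id.continuousOn.integrableOn_compact hcompact0
  have hConstOn : IntegrableOn (fun _ : EuclideanSpace ℝ (Fin d) => u)
      (Metric.closedBall (0 : EuclideanSpace ℝ (Fin d)) r) volume := by
    refine integrableOn_const hfin0.ne
  have hshift : ∀ w : EuclideanSpace ℝ (Fin d),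
      (Metric.closedBall u r).indicator (fun v => v) (w + u)
      = (Metric.closedBall (0 : EuclideanSpace ℝ (Fin d)) r).indicator (fun w => w + u) w := by
    intro w
    have hmemiff : w + u ∈ Metric.closedBall u r
        ↔ w ∈ Metric.closedBall (0 : EuclideanSpace ℝ (Fin d)) r := by
      simp [Metric.mem_closedBall, dist_eq_norm]
    by_cases hw : w ∈ Metric.closedBall (0 : EuclideanSpace ℝ (Fin d)) r
    · rw [Set.indicator_of_mem (hmemiff.2 hw), Set.indicator_of_mem hw]
    · rw [Set.indicator_of_notMem (fun hh => hw (hmemiff.1 hh)), Set.indicator_of_notMem hw]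
  calc (∫ v in Metric.closedBall u r, v)
      = ∫ v, (Metric.closedBall u r).indicator (fun v => v) v := by
        rw [integral_indicator hmeasu]
    _ = ∫ w, (Metric.closedBall u r).indicator (fun v => v) (w + u) := by
        rw [integral_add_right_eq_self]
    _ = ∫ w, (Metric.closedBall (0 : EuclideanSpace ℝ (Fin d)) r).indicator
          (fun w => w + u) w := by simp only [hshift]
    _ = ∫ w in Metric.closedBall (0 : EuclideanSpace ℝ (Fin d)) r, (w + u) := by
        rw [integral_indicator hmeas0]
    _ = (∫ w in Metric.closedBall (0 : EuclideanSpace ℝ (Fin d)) r, w)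
          + ∫ _ in Metric.closedBall (0 : EuclideanSpace ℝ (Fin d)) r, u := by
        rw [integral_add hIdOn hConstOn]
    _ = (volume (Metric.closedBall u r)).toReal • u := by
        rw [hzero, zero_add, setIntegral_const,
          Measure.addHaar_closedBall_center volume u]
        rfl

end aux

set_option maxHeartbeats 1000000 in
/-- Kinetic-energy minimization (bathtub) principle: among densities `0 ≤ f ≤ 1` with mass `ρ`
and momentum `ρ u`, the Maxwellian `M_{ρ,u} = 𝟙_{|u-v|^d ≤ c_d ρ}` (with `c_d = d/|S_{d-1}|`)
minimizes the kinetic energy `∫ (|v|²/2) f dv`. -/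
theorem bgkMaxwellian_minimizes_kinetic_energy (d : ℕ) (hd : 1 ≤ d) (ρ : ℝ) (hρ : 0 < ρ)
    (u : EuclideanSpace ℝ (Fin d)) (S c : ℝ)
    (hS : S = d * (volume (Metric.ball (0 : EuclideanSpace ℝ (Fin d)) 1)).toReal)
    (hc : c = d / S)
    (f : EuclideanSpace ℝ (Fin d) → ℝ) (hfm : Measurable f)
    (hf0 : ∀ v, 0 ≤ f v) (hf1 : ∀ v, f v ≤ 1)
    (hfi : Integrable f volume) (hmass : (∫ v, f v) = ρ)
    (hmomi : Integrable (fun v => f v • v) volume) (hmom : (∫ v, f v • v) = ρ • u)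
    (hke : Integrable (fun v => ‖v‖^2 * f v) volume) :
    (∫ v, (‖v‖^2/2) * bgkMaxwellian d c ρ u v) ≤ ∫ v, (‖v‖^2/2) * f v := by
  classical
  have hdim : Module.finrank ℝ (EuclideanSpace ℝ (Fin d)) = d := finrank_euclideanSpace_fin
  have hd0 : d ≠ 0 := by omega
  have hvlt : volume (Metric.ball (0 : EuclideanSpace ℝ (Fin d)) 1) < ⊤ := measure_ball_lt_top
  have hvpos : 0 < (volume (Metric.ball (0 : EuclideanSpace ℝ (Fin d)) 1)).toReal :=
    ENNReal.toReal_pos (Metric.measure_ball_pos volume _ one_pos).ne' hvlt.ne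
  have hSpos : 0 < S := by rw [hS]; positivity
  have hcpos : 0 < c := by rw [hc]; positivity
  have hcρ : 0 < c * ρ := mul_pos hcpos hρ
  set r : ℝ := (c * ρ) ^ (1 / (d : ℝ)) with hrdef
  have hrpos : 0 < r := Real.rpow_pos_of_pos hcρ _
  have hrd : r ^ d = c * ρ := by
    rw [hrdef, ← Real.rpow_natCast ((c * ρ) ^ (1 / (d : ℝ))) d, ← Real.rpow_mul hcρ.le,
      one_div, inv_mul_cancel₀ (by exact_mod_cast hd0 : (d : ℝ) ≠ 0), Real.rpow_one]
  set B : Set (EuclideanSpace ℝ (Fin d)) := Metric.closedBall u r with hBdef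
  have hmem : ∀ v : EuclideanSpace ℝ (Fin d), v ∈ B ↔ ‖u - v‖ ^ d ≤ c * ρ := by
    intro v
    rw [hBdef, Metric.mem_closedBall, dist_eq_norm, ← norm_neg (v - u), neg_sub, ← hrd]
    exact (pow_le_pow_iff_left₀ (norm_nonneg _) hrpos.le hd0).symm
  set M : EuclideanSpace ℝ (Fin d) → ℝ := fun v => bgkMaxwellian d c ρ u v with hMdef
  have hMfun : M = B.indicator (fun _ => (1 : ℝ)) := by
    funext v
    simp only [hMdef, bgkMaxwellian, Set.indicator_apply]
    by_cases h : v ∈ B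
    · rw [if_pos ((hmem v).1 h), if_pos h]
    · rw [if_neg (fun hh => h ((hmem v).2 hh)), if_neg h]
  -- volume of B
  have hvolB : volume B = ENNReal.ofReal ρ := by
    rw [hBdef, Measure.addHaar_closedBall volume u hrpos.le, hdim, hrd,
      ← ENNReal.ofReal_toReal hvlt.ne, ← ENNReal.ofReal_mul hcρ.le]
    congr 1
    rw [hc, hS]
    field_simp
  have hvolBlt : volume B < ⊤ := by rw [hvolB]; exact ENNReal.ofReal_lt_top
  have hvolBtoReal : (volume B).toReal = ρ := by rw [hvolB, ENNReal.toReal_ofReal hρ.le]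
  have hBmeas : MeasurableSet B := Metric.isClosed_closedBall.measurableSet
  -- integrability of M
  have hMint : Integrable M volume := by
    rw [hMfun]
    exact (IntegrableOn.integrable_indicator (integrableOn_const hvolBlt.ne) hBmeas)
  have hMmass : (∫ v, M v) = ρ := by
    rw [hMfun, integral_indicator hBmeas, setIntegral_const, smul_eq_mul, mul_one]; exact hvolBtoReal
  -- momentum of M
  have hMsmul : (fun v => M v • v) = B.indicator (fun v => v) := by
    funext v
    rw [hMfun]
    by_cases h : v ∈ B
    · rw [Set.indicator_of_mem h, Set.indicator_of_mem h, one_smul]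
    · rw [Set.indicator_of_notMem h, Set.indicator_of_notMem h, zero_smul]
  have hIdOn : IntegrableOn (fun v : EuclideanSpace ℝ (Fin d) => v) B volume :=
    continuous_id.continuousOn.integrableOn_compact (isCompact_closedBall _ _)
  have hMmomi : Integrable (fun v => M v • v) volume := by
    rw [hMsmul]
    exact hIdOn.integrable_indicator hBmeas
  have hMmom : (∫ v, M v • v) = ρ • u := by
    rw [hMsmul, integral_indicator hBmeas, hBdef, integral_id_closedBall u r,
      ← hBdef, hvolBtoReal]
  -- kinetic-energy integrability for M
  have hM0 : ∀ v, 0 ≤ M v := by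
    intro v; rw [hMfun]; exact Set.indicator_nonneg (fun _ _ => zero_le_one) v
  have hM1 : ∀ v, M v ≤ 1 := by
    intro v; rw [hMfun, Set.indicator_apply]; split <;> norm_num
  have hMmeas : Measurable M := by
    rw [hMfun]; exact (measurable_const.indicator hBmeas)
  have hMbound : ∀ v : EuclideanSpace ℝ (Fin d), ‖v‖ ≤ ‖u‖ + r ∨ M v = 0 := by
    intro v
    by_cases h : v ∈ B
    · left
      have : dist v u ≤ r := Metric.mem_closedBall.1 h
      calc ‖v‖ = ‖u + (v - u)‖ := by congr 1; abel
        _ ≤ ‖u‖ + ‖v - u‖ := norm_add_le _ _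
        _ ≤ ‖u‖ + r := by rw [← dist_eq_norm] at *; linarith
    · right; rw [hMfun, Set.indicator_of_notMem h]
  have hMke : Integrable (fun v => ‖v‖ ^ 2 * M v) volume := by
    refine Integrable.mono' (hMint.const_mul ((‖u‖ + r) ^ 2)) ?_ (Filter.Eventually.of_forall ?_)
    · exact ((measurable_norm.pow_const 2).mul hMmeas).aestronglyMeasurable
    · intro v
      rcases hMbound v with h | h
      · rw [Real.norm_eq_abs, abs_of_nonneg (mul_nonneg (by positivity) (hM0 v))]
        exact mul_le_mul_of_nonneg_right
          (by nlinarith [norm_nonneg v, norm_nonneg u, hrpos.le]) (hM0 v)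
      · simp [h]
  have hMke' : Integrable (fun v => ‖v - u‖ ^ 2 * M v) volume := by
    refine Integrable.mono' (hMint.const_mul (r ^ 2)) ?_ (Filter.Eventually.of_forall ?_)
    · exact (((measurable_id.sub_const u).norm.pow_const 2).mul hMmeas).aestronglyMeasurable
    · intro v
      by_cases h : v ∈ B
      · have h1 : ‖v - u‖ ≤ r := by rw [← dist_eq_norm]; exact Metric.mem_closedBall.1 h
        rw [Real.norm_eq_abs, abs_of_nonneg (mul_nonneg (by positivity) (hM0 v))]
        exact mul_le_mul_of_nonneg_right
          (by nlinarith [norm_nonneg (v - u)]) (hM0 v)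
      · have h2 : M v = 0 := by rw [hMfun, Set.indicator_of_notMem h]
        simp [h2]
  -- kinetic-energy integrability for f (shifted)
  open scoped RealInnerProductSpace in
  have hfke' : Integrable (fun v => ‖v - u‖ ^ 2 * f v) volume := by
    have hinner : Integrable (fun v => ⟪u, f v • v⟫) volume := hmomi.const_inner u
    have hexp : (fun v : EuclideanSpace ℝ (Fin d) => ‖v - u‖ ^ 2 * f v)
        = fun v => (‖v‖ ^ 2 * f v - 2 * ⟪u, f v • v⟫) + ‖u‖ ^ 2 * f v := by
      funext v
      have h1 : ‖v - u‖ ^ 2 = ‖v‖ ^ 2 - 2 * ⟪v, u⟫ + ‖u‖ ^ 2 := norm_sub_sq_real v u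
      have h2 : ⟪u, f v • v⟫ = f v * ⟪v, u⟫ := by
        rw [real_inner_smul_right, real_inner_comm]
      rw [h1, h2]; ring
    rw [hexp]
    exact (hke.sub (hinner.const_mul 2)).add (hfi.const_mul _)
  -- pointwise bathtub inequality
  have hpt : ∀ v : EuclideanSpace ℝ (Fin d), 0 ≤ (‖v - u‖ ^ 2 - r ^ 2) * (f v - M v) := by
    intro v
    by_cases h : v ∈ B
    · have h1 : ‖v - u‖ ≤ r := by rw [← dist_eq_norm]; exact Metric.mem_closedBall.1 h
      have h2 : M v = 1 := by rw [hMfun, Set.indicator_of_mem h]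
      have ha : ‖v - u‖ ^ 2 - r ^ 2 ≤ 0 := by nlinarith [norm_nonneg (v - u)]
      have hb : f v - M v ≤ 0 := by have := hf1 v; rw [h2]; linarith
      nlinarith
    · have h1 : r ≤ ‖v - u‖ := by
        rw [← dist_eq_norm]
        exact le_of_lt (not_le.1 (fun hle => h (Metric.mem_closedBall.2 hle)))
      have h2 : M v = 0 := by rw [hMfun, Set.indicator_of_notMem h]
      apply mul_nonneg
      · nlinarith
      · have := hf0 v; rw [h2]; linarith
  have hint : 0 ≤ ∫ v, (‖v - u‖ ^ 2 - r ^ 2) * (f v - M v) := integral_nonneg hpt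
  have hI1 : Integrable (fun v : EuclideanSpace ℝ (Fin d) =>
      ‖v - u‖ ^ 2 * f v - ‖v - u‖ ^ 2 * M v) volume := hfke'.sub hMke'
  have hI3 : Integrable (fun v : EuclideanSpace ℝ (Fin d) => f v - M v) volume := hfi.sub hMint
  have hexpand : (∫ v, (‖v - u‖ ^ 2 - r ^ 2) * (f v - M v))
      = (∫ v, ‖v - u‖ ^ 2 * f v) - (∫ v, ‖v - u‖ ^ 2 * M v)
        - r ^ 2 * ((∫ v, f v) - (∫ v, M v)) := by
    have hpw : ∀ v : EuclideanSpace ℝ (Fin d), (‖v - u‖ ^ 2 - r ^ 2) * (f v - M v)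
        = (‖v - u‖ ^ 2 * f v - ‖v - u‖ ^ 2 * M v) - r ^ 2 * (f v - M v) := by
      intro v; ring
    simp only [hpw]
    rw [integral_sub hI1 (hI3.const_mul _), integral_sub hfke' hMke', integral_const_mul,
      integral_sub hfi hMint]
  have hsecond_f := second_moment_shift u f hfi hmomi hke
  have hsecond_M := second_moment_shift u M hMint hMmomi hMke
  rw [hexpand, hmass, hMmass, hsecond_f, hsecond_M, hmom, hMmom] at hint
  rw [hmass, hMmass] at hint
  simp only [sub_self, mul_zero, sub_zero] at hint
  have hkey : (∫ v, ‖v‖ ^ 2 * M v) ≤ ∫ v, ‖v‖ ^ 2 * f v := by linarith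
  have h2 : ∀ g : EuclideanSpace ℝ (Fin d) → ℝ,
      (∫ v, (‖v‖ ^ 2 / 2) * g v) = (1 / 2) * ∫ v, ‖v‖ ^ 2 * g v := by
    intro g
    rw [← integral_const_mul]
    congr 1; funext v; ring
  calc (∫ v, (‖v‖^2/2) * bgkMaxwellian d c ρ u v) = (1/2) * ∫ v, ‖v‖ ^ 2 * M v := h2 M
    _ ≤ (1/2) * ∫ v, ‖v‖ ^ 2 * f v := by linarith
    _ = ∫ v, (‖v‖^2/2) * f v := (h2 f).symm
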